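/- arXiv:1510.05038 — 2 statements merged into one kernel-verified Lean document; each statement's English description precedes it below -/
import Mathlib

section
/- The numbers O(n,g) of permutations of [n] with exactly n-2g odd cycles satisfy the three-term recurrence O(n+1,g) = O(n,g) + n(n-1)·O(n-1,g-1). -/
open Finset Polynomial

/-- Number of cycles (including fixed points) of a permutation of a finite type. -/
def cycleCount {α : Type*} [Fintype α] [DecidableEq α] (σ : Equiv.Perm α) : ℕ :=
  Multiset.card σ.cycleType + (Fintype.card α - σ.cycleType.sum)

/-- Unsigned Stirling number of the first kind: the number of permutations of an
`m`-element set with exactly `i` cycles. -/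
noncomputable def stirC (m i : ℕ) : ℕ :=
  Nat.card {σ : Equiv.Perm (Fin m) // cycleCount σ = i}

/-- `O(m, g)`: the number of permutations of an `m`-element set all of whose cycles
are odd and which have exactly `m - 2g` cycles. -/
noncomputable def oddCyclePermCount (m : ℕ) (g : ℤ) : ℕ :=
  Nat.card {σ : Equiv.Perm (Fin m) //
    (∀ l ∈ σ.cycleType, Odd l) ∧ (cycleCount σ : ℤ) = (m : ℤ) - 2 * g}

section Aux

open Equiv Equiv.Perm

set_option linter.unusedSectionVars false

variable {α : Type*} [Fintype α] [DecidableEq α]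


/-- insertion of a fresh point into a cycle -/
lemma insert_point {c : Equiv.Perm α} (hc : c.IsCycle) {x y : α}
    (hx : x ∈ c.support) (hy : y ∉ c.support) :
    (Equiv.swap y x * c).IsCycle ∧ (Equiv.swap y x * c).support = insert y c.support := by
  classical
  set L := c.toList x with hL
  have hxs : c x ≠ x := Equiv.Perm.mem_support.mp hx
  have hform : L.formPerm = c := by
    rw [hL, Equiv.Perm.formPerm_toList, hc.cycleOf_eq hxs]
  have hLlen : 2 ≤ L.length := Equiv.Perm.two_le_length_toList_iff_mem_support.mpr hx
  have hLne : L ≠ [] := by intro h; rw [h] at hLlen; simp at hLlen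
  have hhead : L.head hLne = x := by
    rw [List.head_eq_getElem_zero hLne]
    have := Equiv.Perm.toList_getElem_zero (p := c) (x := x) hx
    simpa [List.get_eq_getElem] using this
  have hLcons : L = x :: L.tail := by
    conv_lhs => rw [← List.cons_head_tail hLne, hhead]
  have hnodupL : L.Nodup := Equiv.Perm.nodup_toList c x
  have hyL : y ∉ L := by
    intro hmem
    rw [hL, Equiv.Perm.mem_toList_iff] at hmem
    exact hy ((hmem.1.mem_support_iff).mp hmem.2)
  have hnodup : (y :: L).Nodup := List.nodup_cons.mpr ⟨hyL, hnodupL⟩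
  have hlen : 2 ≤ (y :: L).length := by simp; omega
  have hfp : (y :: L).formPerm = Equiv.swap y x * c := by
    rw [hLcons, List.formPerm_cons_cons, ← hLcons, hform]
  have hsupL : c.support = L.toFinset := by
    rw [← hform]
    exact List.support_formPerm_of_nodup L hnodupL (fun z hz => by
      rw [hz] at hLlen; simp at hLlen)
  constructor
  · rw [← hfp]
    exact List.isCycle_formPerm hnodup hlen
  · rw [← hfp, List.support_formPerm_of_nodup _ hnodup (fun z hz => by
      rw [hz] at hlen; simp at hlen), List.toFinset_cons, hsupL]

/-- predicate on cycle types corresponding to `O(·, g)`, independent of ambient size -/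
def Rg (g : ℤ) (M : Multiset ℕ) : Prop :=
  (∀ x ∈ M, Odd x) ∧ (M.sum : ℤ) - Multiset.card M = 2 * g

lemma key_struct {a b l : α} (hab : a ≠ b) (hal : a ≠ l) (hbl : b ≠ l)
    {η : Equiv.Perm α} (ha : η a = a) (hl : η l = l) :
    ∃ (N : Multiset ℕ) (k : ℕ),
      (Equiv.swap a l * Equiv.swap l b * η).cycleType = (k + 2) ::ₘ N ∧
      ((k = 1 ∧ η.cycleType = N) ∨ (2 ≤ k ∧ η.cycleType = k ::ₘ N)) := by
  classical
  set t := Equiv.swap a l * Equiv.swap l b with ht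
  have hta : t a = l := by
    simp [ht, Equiv.swap_apply_of_ne_of_ne hal hab]
  have htl : t l = b := by
    simp [ht, Equiv.swap_apply_of_ne_of_ne (Ne.symm hab) hbl]
  have htb : t b = a := by
    simp [ht]
  have htother : ∀ x, x ≠ a → x ≠ b → x ≠ l → t x = x := by
    intro x hxa hxb hxl
    simp [ht, Equiv.swap_apply_of_ne_of_ne hxl hxb, Equiv.swap_apply_of_ne_of_ne hxa hxl]
  have htt : t.IsThreeCycle := by
    have := Equiv.Perm.isThreeCycle_swap_mul_swap_same (Ne.symm hal) (Ne.symm hbl) hab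
    rwa [← Equiv.swap_comm a l, ← ht] at this
  by_cases hb : η b = b
  · refine ⟨η.cycleType, 1, ?_, Or.inl ⟨rfl, rfl⟩⟩
    have hd : t.Disjoint η := by
      intro x
      by_cases hxa : x = a; · exact Or.inr (by rw [hxa, ha])
      by_cases hxb : x = b; · exact Or.inr (by rw [hxb, hb])
      by_cases hxl : x = l; · exact Or.inr (by rw [hxl, hl])
      exact Or.inl (htother x hxa hxb hxl)
    rw [hd.cycleType_mul, htt.cycleType]
    rfl
  · set c := η.cycleOf b with hc
    have hcc : c.IsCycle := Equiv.Perm.isCycle_cycleOf η hb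
    have hcb : c b = η b := Equiv.Perm.cycleOf_apply_self η b
    have hbsup : b ∈ c.support := Equiv.Perm.mem_support.mpr (by rw [hcb]; exact hb)
    have hsupc : c.support ⊆ η.support := Equiv.Perm.support_cycleOf_le η b
    have hasup : a ∉ c.support := fun h =>
      (Equiv.Perm.mem_support.mp (hsupc h)) ha
    have hlsup : l ∉ c.support := fun h =>
      (Equiv.Perm.mem_support.mp (hsupc h)) hl
    have hmem : c ∈ η.cycleFactorsFinset :=
      (Equiv.Perm.cycleOf_mem_cycleFactorsFinset_iff).mpr (Equiv.Perm.mem_support.mpr hb)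
    have hd : (η * c⁻¹).Disjoint c :=
      Equiv.Perm.disjoint_mul_inv_of_mem_cycleFactorsFinset hmem
    set ρ := η * c⁻¹ with hρ
    have hdec : η = ρ * c := by rw [hρ]; group
    -- first insertion : l
    obtain ⟨h1c, h1s⟩ := insert_point hcc hbsup hlsup
    -- second insertion : a
    have hl1 : l ∈ (Equiv.swap l b * c).support := by rw [h1s]; exact Finset.mem_insert_self _ _
    have ha1 : a ∉ (Equiv.swap l b * c).support := by
      rw [h1s]; simp [hal, hasup]
    obtain ⟨h2c, h2s⟩ := insert_point h1c hl1 ha1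
    have htc : t * c = Equiv.swap a l * (Equiv.swap l b * c) := by rw [ht, mul_assoc]
    have h2s' : (t * c).support = insert a (insert l c.support) := by rw [htc, h2s, h1s]
    have h2c' : (t * c).IsCycle := by rw [htc]; exact h2c
    -- supports cardinality
    have hcard : (t * c).support.card = c.support.card + 2 := by
      rw [h2s', Finset.card_insert_of_notMem (by simp [hal, hasup]),
        Finset.card_insert_of_notMem hlsup]
    -- ρ fixes a and l and is disjoint from t*c
    have hca : c a = a := Equiv.Perm.notMem_support.mp hasup
    have hcl : c l = l := Equiv.Perm.notMem_support.mp hlsup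
    have hinva : c⁻¹ a = a := by rw [Equiv.Perm.inv_eq_iff_eq]; exact hca.symm
    have hinvl : c⁻¹ l = l := by rw [Equiv.Perm.inv_eq_iff_eq]; exact hcl.symm
    have hρa : ρ a = a := by rw [hρ]; simp [Equiv.Perm.mul_apply, hinva, ha]
    have hρl : ρ l = l := by rw [hρ]; simp [Equiv.Perm.mul_apply, hinvl, hl]
    have hd2 : (t * c).Disjoint ρ := by
      intro x
      by_cases hx : ρ x = x
      · exact Or.inr hx
      · left
        apply Equiv.Perm.notMem_support.mp
        rw [h2s']
        have hxc : c x = x := (hd x).resolve_left hx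
        simp only [Finset.mem_insert]
        push_neg
        refine ⟨fun h => hx (h ▸ hρa), fun h => hx (h ▸ hρl), ?_⟩
        exact fun h => (Equiv.Perm.mem_support.mp h) hxc
    have hcomm : ρ * c = c * ρ := (hd.commute).eq
    have hteq : t * η = (t * c) * ρ := by
      rw [hdec, hcomm, ← mul_assoc]
    refine ⟨ρ.cycleType, c.support.card, ?_, Or.inr ⟨hcc.two_le_card_support, ?_⟩⟩
    · rw [hteq, hd2.cycleType_mul, h2c'.cycleType, hcard]
      rfl
    · rw [hdec, hd.cycleType_mul, hcc.cycleType, add_comm]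
      rfl

lemma key_Rg {a b l : α} (hab : a ≠ b) (hal : a ≠ l) (hbl : b ≠ l)
    {η : Equiv.Perm α} (ha : η a = a) (hl : η l = l) (g : ℤ) :
    Rg g ((Equiv.swap a l * Equiv.swap l b * η).cycleType) ↔ Rg (g - 1) η.cycleType := by
  obtain ⟨N, k, hct, hcase⟩ := key_struct hab hal hbl ha hl
  rcases hcase with ⟨hk, hη⟩ | ⟨hk, hη⟩
  · subst hk
    rw [hct, hη]
    unfold Rg
    simp only [Multiset.mem_cons, Multiset.sum_cons, Multiset.card_cons, forall_eq_or_imp]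
    push_cast
    constructor
    · rintro ⟨⟨-, hodd⟩, hsum⟩; exact ⟨hodd, by omega⟩
    · rintro ⟨hodd, hsum⟩; exact ⟨⟨⟨1, by norm_num⟩, hodd⟩, by omega⟩
  · rw [hct, hη]
    unfold Rg
    simp only [Multiset.mem_cons, Multiset.sum_cons, Multiset.card_cons, forall_eq_or_imp]
    push_cast
    have hparity : Odd (k + 2) ↔ Odd k :=
      ⟨fun ⟨m, hm⟩ => ⟨m - 1, by omega⟩, fun ⟨m, hm⟩ => ⟨m + 1, by omega⟩⟩
    constructor
    · rintro ⟨⟨hodd1, hodd⟩, hsum⟩; exact ⟨⟨hparity.mp hodd1, hodd⟩, by omega⟩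
    · rintro ⟨⟨hodd1, hodd⟩, hsum⟩; exact ⟨⟨hparity.mpr hodd1, hodd⟩, by omega⟩

lemma odd_lcm {M : Multiset ℕ} (h : ∀ x ∈ M, Odd x) : Odd M.lcm := by
  induction M using Multiset.induction_on with
  | empty => simp [Multiset.lcm_zero]
  | cons a s ih =>
    rw [Multiset.lcm_cons]
    have ha := h a (Multiset.mem_cons_self a s)
    have hs := ih (fun x hx => h x (Multiset.mem_cons_of_mem hx))
    have hdvd : lcm a s.lcm ∣ a * s.lcm := lcm_dvd (dvd_mul_right _ _) (dvd_mul_left _ _)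
    have hprod : Odd (a * s.lcm) := ha.mul hs
    rw [← Nat.not_even_iff_odd] at hprod ⊢
    intro he
    exact hprod ((even_iff_two_dvd.mpr (dvd_trans (even_iff_two_dvd.mp he) hdvd)))

/-- counting permutations that fix the complement of a subtype -/
lemma card_fix_compl {β : Type*} [Fintype β] [DecidableEq β] {p : α → Prop} [DecidablePred p]
    (f : β ≃ Subtype p) (R : Multiset ℕ → Prop) :
    Nat.card {σ : Equiv.Perm α // (∀ x, ¬ p x → σ x = x) ∧ R σ.cycleType} =
      Nat.card {ρ : Equiv.Perm β // R ρ.cycleType} := by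
  classical
  have hbij : Function.Bijective (fun ρ : {ρ : Equiv.Perm β // R ρ.cycleType} =>
      (⟨ρ.1.extendDomain f, fun x hx => ρ.1.extendDomain_apply_not_subtype f hx,
        by rw [Equiv.Perm.cycleType_extendDomain]; exact ρ.2⟩ :
        {σ : Equiv.Perm α // (∀ x, ¬ p x → σ x = x) ∧ R σ.cycleType})) := by
    constructor
    · rintro ⟨ρ₁, h₁⟩ ⟨ρ₂, h₂⟩ h
      simp only [Subtype.mk_eq_mk] at h ⊢
      ext b
      have h2 := congrArg (fun π : Equiv.Perm α => π (f b)) h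
      simp only [Equiv.Perm.extendDomain_apply_image] at h2
      exact f.injective (Subtype.ext h2)
    · rintro ⟨σ, hfix, hR⟩
      have hiff : ∀ x, p x ↔ p (σ x) := by
        intro x
        constructor
        · intro hx
          by_contra hσx
          have h1 : σ (σ x) = σ x := hfix _ hσx
          have h2 : σ x = x := σ.injective h1
          rw [h2] at hσx
          exact hσx hx
        · intro hx
          by_contra hx'
          have h1 := hfix _ hx'
          rw [h1] at hx
          exact hx' hx
      set σ' : Equiv.Perm (Subtype p) := σ.subtypePerm (fun x => (hiff x).symm) with hσ'
      have hext : (f.permCongr.symm σ').extendDomain f = σ := by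
        ext x
        by_cases hx : p x
        · rw [Equiv.Perm.extendDomain_apply_subtype _ f hx]
          simp [Equiv.permCongr_apply, hσ']
        · rw [Equiv.Perm.extendDomain_apply_not_subtype _ f hx]
          exact (hfix x hx).symm
      refine ⟨⟨f.permCongr.symm σ', ?_⟩, Subtype.ext hext⟩
      rw [← Equiv.Perm.cycleType_extendDomain f, hext]
      exact hR
  exact (Nat.card_congr (Equiv.ofBijective _ hbij)).symm

/-- split a subtype count by a decidable condition -/
def subtypeSplitEquiv (p q : α → Prop) [DecidablePred q] :
    {x // p x} ≃ {x // p x ∧ q x} ⊕ {x // p x ∧ ¬ q x} where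
  toFun x := if h : q x.1 then Sum.inl ⟨x.1, x.2, h⟩ else Sum.inr ⟨x.1, x.2, h⟩
  invFun y := y.elim (fun z => ⟨z.1, z.2.1⟩) (fun z => ⟨z.1, z.2.1⟩)
  left_inv x := by by_cases h : q x.1 <;> simp [h]
  right_inv y := by
    rcases y with z | z
    · simp [z.2.2]
    · simp [z.2.2]

lemma nat_card_sigma {ι : Type*} [Fintype ι] (f : ι → Type*) [∀ i, Finite (f i)] :
    Nat.card (Σ i, f i) = ∑ i, Nat.card (f i) := by
  letI : ∀ i, Fintype (f i) := fun i => Fintype.ofFinite (f i)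
  simp [Nat.card_eq_fintype_card]

lemma t_a {a b l : α} (hab : a ≠ b) (hal : a ≠ l) :
    (Equiv.swap a l * Equiv.swap l b) a = l := by
  simp [Equiv.swap_apply_of_ne_of_ne hal hab]

lemma t_l {a b l : α} (hab : a ≠ b) (hbl : b ≠ l) :
    (Equiv.swap a l * Equiv.swap l b) l = b := by
  simp [Equiv.swap_apply_of_ne_of_ne (Ne.symm hab) hbl]

lemma sq_fix {σ : Equiv.Perm α} (hodd : ∀ x ∈ σ.cycleType, Odd x) {l : α}
    (hml : σ l ≠ l) : σ (σ l) ≠ l := by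
  intro h2
  have horder : Odd (orderOf σ) := by
    rw [← Equiv.Perm.lcm_cycleType]
    exact odd_lcm hodd
  obtain ⟨s, hs⟩ := horder
  have hpow : σ ^ orderOf σ = 1 := pow_orderOf_eq_one σ
  have key : ∀ m : ℕ, (σ ^ (2 * m)) (σ l) = σ l := by
    intro m
    induction m with
    | zero => simp
    | succ m ih =>
      have : 2 * (m + 1) = 2 * m + 2 := by ring
      rw [this, pow_add, Equiv.Perm.mul_apply]
      have h3 : (σ ^ 2) (σ l) = σ l := by
        rw [pow_two, Equiv.Perm.mul_apply, h2]
      rw [h3, ih]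
  have : (σ ^ (2 * s + 1)) l = l := by rw [← hs, hpow]; rfl
  rw [pow_add, pow_one, Equiv.Perm.mul_apply, key] at this
  exact hml this

/-- the main bijection for the non-fixed part -/
noncomputable def moveEquiv (l : α) (g : ℤ) :
    {σ : Equiv.Perm α // Rg g σ.cycleType ∧ σ l ≠ l} ≃
    {q : (α × α) × Equiv.Perm α // q.1.1 ≠ l ∧ q.1.2 ≠ l ∧ q.1.1 ≠ q.1.2 ∧
      q.2 q.1.1 = q.1.1 ∧ q.2 l = l ∧ Rg (g - 1) q.2.cycleType} where
  toFun := fun σh =>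
    ⟨((σh.1⁻¹ l, σh.1 l), (Equiv.swap (σh.1⁻¹ l) l * Equiv.swap l (σh.1 l))⁻¹ * σh.1), by
      obtain ⟨σ, hR, hml⟩ := σh
      simp only
      have hal : σ⁻¹ l ≠ l := by
        intro h
        have h2 := (show σ (σ⁻¹ l) = l from σ.apply_symm_apply l)
        rw [h] at h2
        exact hml h2
      have hbl : σ l ≠ l := hml
      have hab : σ⁻¹ l ≠ σ l := by
        intro h
        have h2 := (show σ (σ⁻¹ l) = l from σ.apply_symm_apply l)
        rw [h] at h2
        exact sq_fix hR.1 hml h2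
      have hσa : σ (σ⁻¹ l) = l := (show σ (σ⁻¹ l) = l from σ.apply_symm_apply l)
      have hηa : ((Equiv.swap (σ⁻¹ l) l * Equiv.swap l (σ l))⁻¹ * σ) (σ⁻¹ l) = σ⁻¹ l := by
        rw [Equiv.Perm.mul_apply, hσa]
        exact (Equiv.Perm.inv_eq_iff_eq).mpr (t_a hab hal).symm
      have hηl : ((Equiv.swap (σ⁻¹ l) l * Equiv.swap l (σ l))⁻¹ * σ) l = l := by
        rw [Equiv.Perm.mul_apply]
        exact (Equiv.Perm.inv_eq_iff_eq).mpr (t_l hab hbl).symm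
      refine ⟨hal, hbl, hab, hηa, hηl, ?_⟩
      refine (key_Rg hab hal hbl hηa hηl g).mp ?_
      rw [mul_inv_cancel_left]
      exact hR⟩
  invFun := fun q =>
    ⟨Equiv.swap q.1.1.1 l * Equiv.swap l q.1.1.2 * q.1.2, by
      obtain ⟨⟨⟨a, b⟩, η⟩, hal, hbl, hab, hηa, hηl, hRg⟩ := q
      simp only at hal hbl hab hηa hηl hRg ⊢
      constructor
      · exact (key_Rg hab hal hbl hηa hηl g).mpr hRg
      · rw [Equiv.Perm.mul_apply, hηl, t_l hab hbl]
        exact hbl⟩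
  left_inv := fun σh => by
    apply Subtype.ext
    simp only
    exact mul_inv_cancel_left _ _
  right_inv := fun q => by
    obtain ⟨⟨⟨a, b⟩, η⟩, hal, hbl, hab, hηa, hηl, hRg⟩ := q
    simp only at hal hbl hab hηa hηl hRg
    apply Subtype.ext
    have hσa : (Equiv.swap a l * Equiv.swap l b * η) a = l := by
      rw [Equiv.Perm.mul_apply, hηa]
      exact t_a hab hal
    have hσl : (Equiv.swap a l * Equiv.swap l b * η) l = b := by
      rw [Equiv.Perm.mul_apply, hηl]
      exact t_l hab hbl
    have hinv : (Equiv.swap a l * Equiv.swap l b * η)⁻¹ l = a := by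
      rw [Equiv.Perm.inv_eq_iff_eq, hσa]
    simp only
    rw [hσl, hinv, inv_mul_cancel_left]

lemma oddCount_eq (m : ℕ) (g : ℤ) :
    oddCyclePermCount m g = Nat.card {σ : Equiv.Perm (Fin m) // Rg g σ.cycleType} := by
  apply Nat.card_congr
  apply Equiv.subtypeEquivRight
  intro σ
  have hsum : σ.cycleType.sum ≤ m := by
    rw [Equiv.Perm.sum_cycleType]
    simpa using Finset.card_le_univ σ.support
  have hc : (cycleCount σ : ℤ) =
      (Multiset.card σ.cycleType : ℤ) + ((m : ℤ) - (σ.cycleType.sum : ℤ)) := by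
    unfold cycleCount
    rw [Fintype.card_fin, Nat.cast_add, Nat.cast_sub hsum]
  unfold Rg
  rw [hc]
  constructor
  · rintro ⟨h1, h2⟩; exact ⟨h1, by omega⟩
  · rintro ⟨h1, h2⟩; exact ⟨h1, by omega⟩

lemma fixed_count (n : ℕ) (g : ℤ) :
    Nat.card {σ : Equiv.Perm (Fin (n + 1)) //
      Rg g σ.cycleType ∧ σ (Fin.last n) = Fin.last n} = oddCyclePermCount n g := by
  classical
  have e1 : {σ : Equiv.Perm (Fin (n + 1)) // Rg g σ.cycleType ∧ σ (Fin.last n) = Fin.last n} ≃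
      {σ : Equiv.Perm (Fin (n + 1)) //
        (∀ x, ¬ (x ≠ Fin.last n) → σ x = x) ∧ Rg g σ.cycleType} := by
    apply Equiv.subtypeEquivRight
    intro σ
    constructor
    · rintro ⟨h1, h2⟩
      exact ⟨fun x hx => by rw [not_not.mp hx]; exact h2, h1⟩
    · rintro ⟨h1, h2⟩
      exact ⟨h2, h1 _ (by simp)⟩
  have hcard : Fintype.card (Fin n) = Fintype.card {x : Fin (n + 1) // x ≠ Fin.last n} := by
    have h2 : Fintype.card {x : Fin (n + 1) // ¬ x = Fin.last n} =
        Fintype.card (Fin (n + 1)) - Fintype.card {x : Fin (n + 1) // x = Fin.last n} :=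
      Fintype.card_subtype_compl _
    simp only [Fintype.card_subtype_eq] at h2
    simp only [Ne]
    rw [h2]
    simp
  have f := Fintype.equivOfCardEq hcard
  rw [Nat.card_congr e1, card_fix_compl f (Rg g), oddCount_eq]

lemma eta_count (n : ℕ) (g : ℤ) {a b : Fin (n + 1)}
    (hal : a ≠ Fin.last n) (hbl : b ≠ Fin.last n) (hab : a ≠ b) :
    Nat.card {η : Equiv.Perm (Fin (n + 1)) //
      η a = a ∧ η (Fin.last n) = Fin.last n ∧ Rg (g - 1) η.cycleType} =
    oddCyclePermCount (n - 1) (g - 1) := by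
  classical
  set p : Fin (n + 1) → Prop := fun x => ¬ (x = a ∨ x = Fin.last n) with hp
  have e1 : {η : Equiv.Perm (Fin (n + 1)) //
      η a = a ∧ η (Fin.last n) = Fin.last n ∧ Rg (g - 1) η.cycleType} ≃
      {η : Equiv.Perm (Fin (n + 1)) // (∀ x, ¬ p x → η x = x) ∧ Rg (g - 1) η.cycleType} := by
    apply Equiv.subtypeEquivRight
    intro η
    constructor
    · rintro ⟨h1, h2, h3⟩
      refine ⟨fun x hx => ?_, h3⟩
      rcases not_not.mp hx with rfl | rfl
      · exact h1
      · exact h2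
    · rintro ⟨h1, h2⟩
      exact ⟨h1 a (by simp [hp]), h1 _ (by simp [hp]), h2⟩
  have hfil : (Finset.univ.filter fun x => x = a ∨ x = Fin.last n) = {a, Fin.last n} := by
    ext x; simp
  have hcard2 : Fintype.card {x : Fin (n + 1) // x = a ∨ x = Fin.last n} = 2 := by
    rw [Fintype.card_subtype, hfil, Finset.card_insert_of_notMem (by simp [hal]),
      Finset.card_singleton]
  have hcard : Fintype.card (Fin (n - 1)) = Fintype.card {x : Fin (n + 1) // p x} := by
    have h2 : Fintype.card {x : Fin (n + 1) // p x} =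
        Fintype.card (Fin (n + 1)) - Fintype.card {x : Fin (n + 1) // x = a ∨ x = Fin.last n} :=
      Fintype.card_subtype_compl _
    rw [h2, hcard2]
    have h3 : (3 : ℕ) ≤ n + 1 := by
      have hc3 : ({a, b, Fin.last n} : Finset (Fin (n + 1))).card = 3 := by
        rw [Finset.card_insert_of_notMem (by simp [hab, hal]),
          Finset.card_insert_of_notMem (by simp [hbl]), Finset.card_singleton]
      calc (3 : ℕ) = ({a, b, Fin.last n} : Finset (Fin (n + 1))).card := hc3.symm
        _ ≤ (Finset.univ : Finset (Fin (n + 1))).card := Finset.card_le_univ _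
        _ = n + 1 := by simp
    simp only [Fintype.card_fin]
    omega
  have f := Fintype.equivOfCardEq hcard
  rw [Nat.card_congr e1, card_fix_compl f (Rg (g - 1)), oddCount_eq]

lemma move_count (n : ℕ) (g : ℤ) :
    Nat.card {q : (Fin (n + 1) × Fin (n + 1)) × Equiv.Perm (Fin (n + 1)) //
      q.1.1 ≠ Fin.last n ∧ q.1.2 ≠ Fin.last n ∧ q.1.1 ≠ q.1.2 ∧
      q.2 q.1.1 = q.1.1 ∧ q.2 (Fin.last n) = Fin.last n ∧ Rg (g - 1) q.2.cycleType} =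
    n * (n - 1) * oddCyclePermCount (n - 1) (g - 1) := by
  classical
  set l := Fin.last n with hldef
  set c := oddCyclePermCount (n - 1) (g - 1) with hcdef
  have e1 := Equiv.subtypeProdEquivSigmaSubtype
    (fun (ab : Fin (n + 1) × Fin (n + 1)) (η : Equiv.Perm (Fin (n + 1))) =>
      ab.1 ≠ l ∧ ab.2 ≠ l ∧ ab.1 ≠ ab.2 ∧ η ab.1 = ab.1 ∧ η l = l ∧ Rg (g - 1) η.cycleType)
  rw [Nat.card_congr e1, nat_card_sigma]
  have hterm : ∀ ab : Fin (n + 1) × Fin (n + 1),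
      Nat.card {η : Equiv.Perm (Fin (n + 1)) //
        ab.1 ≠ l ∧ ab.2 ≠ l ∧ ab.1 ≠ ab.2 ∧ η ab.1 = ab.1 ∧ η l = l ∧
          Rg (g - 1) η.cycleType} =
      if ab.1 ≠ l ∧ ab.2 ≠ l ∧ ab.1 ≠ ab.2 then c else 0 := by
    intro ab
    by_cases hgood : ab.1 ≠ l ∧ ab.2 ≠ l ∧ ab.1 ≠ ab.2
    · rw [if_pos hgood]
      obtain ⟨h1, h2, h3⟩ := hgood
      have e2 : {η : Equiv.Perm (Fin (n + 1)) //
          ab.1 ≠ l ∧ ab.2 ≠ l ∧ ab.1 ≠ ab.2 ∧ η ab.1 = ab.1 ∧ η l = l ∧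
            Rg (g - 1) η.cycleType} ≃
          {η : Equiv.Perm (Fin (n + 1)) //
            η ab.1 = ab.1 ∧ η l = l ∧ Rg (g - 1) η.cycleType} :=
        Equiv.subtypeEquivRight (fun η => by tauto)
      rw [Nat.card_congr e2, hcdef]
      exact eta_count n g h1 h2 h3
    · rw [if_neg hgood]
      have : IsEmpty {η : Equiv.Perm (Fin (n + 1)) //
          ab.1 ≠ l ∧ ab.2 ≠ l ∧ ab.1 ≠ ab.2 ∧ η ab.1 = ab.1 ∧ η l = l ∧
            Rg (g - 1) η.cycleType} :=
        ⟨fun x => hgood ⟨x.2.1, x.2.2.1, x.2.2.2.1⟩⟩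
      exact Nat.card_of_isEmpty
  rw [Finset.sum_congr rfl (fun ab _ => hterm ab)]
  rw [Fintype.sum_prod_type]
  have hinner : ∀ a : Fin (n + 1),
      (∑ b : Fin (n + 1), if a ≠ l ∧ b ≠ l ∧ a ≠ b then c else 0) =
      if a ≠ l then (n - 1) * c else 0 := by
    intro a
    by_cases ha : a ≠ l
    · rw [if_pos ha]
      have hcong : ∀ b : Fin (n + 1),
          (if a ≠ l ∧ b ≠ l ∧ a ≠ b then c else 0) = if b ≠ l ∧ b ≠ a then c else 0 := by
        intro b
        congr 1
        simp only [eq_iff_iff]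
        constructor
        · rintro ⟨-, hb, hab⟩; exact ⟨hb, Ne.symm hab⟩
        · rintro ⟨hb, hab⟩; exact ⟨ha, hb, Ne.symm hab⟩
      rw [Finset.sum_congr rfl (fun b _ => hcong b)]
      rw [← Finset.sum_filter]
      have hfil : (Finset.univ.filter fun b : Fin (n + 1) => b ≠ l ∧ b ≠ a) =
          (Finset.univ.erase l).erase a := by
        ext b
        simp only [Finset.mem_filter, Finset.mem_erase, Finset.mem_univ, and_true]
        tauto
      rw [hfil, Finset.sum_const, smul_eq_mul]
      congr 1
      rw [Finset.card_erase_of_mem (by simp [ha]), Finset.card_erase_of_mem (by simp)]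
      simp
    · rw [if_neg ha]
      apply Finset.sum_eq_zero
      intro b _
      rw [if_neg (by tauto)]
  rw [Finset.sum_congr rfl (fun a _ => hinner a)]
  rw [← Finset.sum_filter, Finset.filter_ne', Finset.sum_const, smul_eq_mul,
    Finset.card_erase_of_mem (by simp)]
  simp only [Finset.card_univ, Fintype.card_fin, Nat.add_sub_cancel]
  ring

end Aux

/-- Three-term recurrence `O(n+1,g) = O(n,g) + n(n-1)·O(n-1,g-1)`
(with `O(m,g) = 0` when `g < 0` or `m - 2g < 0`). -/
theorem stmt3 (n : ℕ) (g : ℤ) :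
    oddCyclePermCount (n + 1) g =
      oddCyclePermCount n g + n * (n - 1) * oddCyclePermCount (n - 1) (g - 1) := by
  classical
  rw [oddCount_eq]
  rw [Nat.card_congr (subtypeSplitEquiv (fun σ : Equiv.Perm (Fin (n + 1)) => Rg g σ.cycleType)
    (fun σ => σ (Fin.last n) = Fin.last n)), Nat.card_sum]
  congr 1
  · exact fixed_count n g
  · rw [Nat.card_congr (moveEquiv (Fin.last n) g)]
    exact move_count n g
end

section
/- Define A(n,g) for n ≥ 1 and g ≥ 0 by the polynomial identity ∑_{g≥0} A(n,g)·x^{n+1-2g} = ((2n)!/(2^n n!(n+1)!))·∑_{k=0}^n C(n,k)·(x+n-k)_{n+1}. Then Chapuy's recursion holds: 2g·A(n,g) = ∑_{k=1}^{g} C(n+1-2(g-k), 2k+1)·A(n, g-k). -/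
open Finset Polynomial


noncomputable def FF (n : ℕ) (a : ℚ) : Polynomial ℚ :=
  ∏ i ∈ Finset.range (n + 1), (X + C (a - (i : ℚ)))

noncomputable def QQ (n : ℕ) : Polynomial ℚ :=
  ∑ k ∈ Finset.range (n + 1), (n.choose k : ℚ) • FF n ((n : ℚ) - k)

lemma FF_rel (n : ℕ) (a : ℚ) :
    (X + C (a + 1)) * FF n a = (X + C (a - n)) * FF n (a + 1) := by
  have h1 : ∏ i ∈ Finset.range (n + 2), (X + C (a + 1 - (i : ℚ)))
      = FF n a * (X + C (a + 1)) := by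
    rw [Finset.prod_range_succ']
    simp only [FF]
    congr 1
    · apply Finset.prod_congr rfl
      intro i _
      push_cast
      ring_nf
    · norm_num
  have h2 : ∏ i ∈ Finset.range (n + 2), (X + C (a + 1 - (i : ℚ)))
      = FF n (a + 1) * (X + C (a - n)) := by
    rw [Finset.prod_range_succ]
    simp only [FF]
    congr 1
    push_cast
    ring_nf
  rw [mul_comm (X + C (a+1)), mul_comm (X + C (a-(n:ℚ))), ← h1, ← h2]

lemma FF_comp_add (n : ℕ) (a : ℚ) : (FF n a).comp (X + 1) = FF n (a + 1) := by
  simp only [FF]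
  rw [Polynomial.prod_comp]
  apply Finset.prod_congr rfl
  intro i _
  simp only [add_comp, X_comp, C_comp]
  rw [← C_1, add_assoc, ← C_add]
  congr 1
  ring

lemma FF_comp_sub (n : ℕ) (a : ℚ) : (FF n a).comp (X - 1) = FF n (a - 1) := by
  simp only [FF]
  rw [Polynomial.prod_comp]
  apply Finset.prod_congr rfl
  intro i _
  simp only [sub_comp, add_comp, X_comp, C_comp]
  rw [← C_1, sub_eq_add_neg, add_assoc, ← C_neg, ← C_add]
  congr 1
  ring

lemma FF_step (n : ℕ) (a : ℚ) :
    X * FF n (a + 1) - X * FF n (a - 1)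
      = C ((n : ℚ) + 2) * FF n a + C ((n : ℚ) - a) * FF n (a + 1) + C a * FF n (a - 1) := by
  have h1 := FF_rel n a
  have h2 := FF_rel n (a - 1)
  rw [sub_add_cancel] at h2
  have e1 : C (a + 1) = C a + C 1 := by rw [← C_add]
  have e2 : C (a - (n:ℚ)) = C a - C (n:ℚ) := by rw [← C_sub]
  have e4 : C (a - 1 - (n:ℚ)) = C a - C 1 - C (n:ℚ) := by rw [← C_sub, ← C_sub]
  have e5 : C ((n:ℚ) + 2) = C (n:ℚ) + C 1 + C 1 := by
    rw [← C_add, ← C_add]; congr 1; ring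
  have e6 : C ((n:ℚ) - a) = C (n:ℚ) - C a := by rw [← C_sub]
  rw [e1, e2] at h1
  rw [e4] at h2
  rw [e5, e6]
  linear_combination -h1 - h2

lemma sumA (n : ℕ) :
    ∑ k ∈ Finset.range (n + 1), ((n.choose k : ℚ) * k) • FF n ((n : ℚ) - k + 1)
      = ∑ k ∈ Finset.range (n + 1), ((n.choose k : ℚ) * ((n : ℚ) - k)) • FF n ((n : ℚ) - k) := by
  rw [Finset.sum_range_succ', Finset.sum_range_succ]
  simp only [Nat.cast_zero, mul_zero, zero_smul, add_zero, sub_self]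
  apply Finset.sum_congr rfl
  intro k hk
  rw [Finset.mem_range] at hk
  have harg : (n : ℚ) - (k + 1 : ℕ) + 1 = (n : ℚ) - k := by push_cast; ring
  rw [harg]
  congr 1
  have := Nat.choose_succ_right_eq n k
  have hsub : ((n - k : ℕ) : ℚ) = (n : ℚ) - k := by
    rw [Nat.cast_sub (le_of_lt hk)]
  calc ((n.choose (k+1) : ℚ) * (k + 1 : ℕ))
      = ((n.choose (k+1) * (k+1) : ℕ) : ℚ) := by push_cast; ring
    _ = ((n.choose k * (n - k) : ℕ) : ℚ) := by rw [this]
    _ = (n.choose k : ℚ) * ((n : ℚ) - k) := by push_cast [Nat.cast_sub (le_of_lt hk)]; ring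

lemma sumB (n : ℕ) :
    ∑ k ∈ Finset.range (n + 1), ((n.choose k : ℚ) * ((n : ℚ) - k)) • FF n ((n : ℚ) - k - 1)
      = ∑ k ∈ Finset.range (n + 1), ((n.choose k : ℚ) * k) • FF n ((n : ℚ) - k) := by
  rw [Finset.sum_range_succ, Finset.sum_range_succ']
  simp only [Nat.cast_zero, mul_zero, zero_smul, add_zero, sub_self]
  apply Finset.sum_congr rfl
  intro k hk
  rw [Finset.mem_range] at hk
  have harg : (n : ℚ) - k - 1 = (n : ℚ) - (k + 1 : ℕ) := by push_cast; ring
  rw [harg]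
  congr 1
  have := Nat.choose_succ_right_eq n k
  calc (n.choose k : ℚ) * ((n : ℚ) - k)
      = ((n.choose k * (n - k) : ℕ) : ℚ) := by push_cast [Nat.cast_sub (le_of_lt hk)]; ring
    _ = ((n.choose (k+1) * (k+1) : ℕ) : ℚ) := by rw [this]
    _ = (n.choose (k+1) : ℚ) * ((k + 1 : ℕ) : ℚ) := by push_cast; ring

lemma keyid (n : ℕ) :
    X * ((QQ n).comp (X + 1) - (QQ n).comp (X - 1)) = (2 * ((n : ℚ) + 1)) • QQ n := by
  have hc1 : (QQ n).comp (X + 1) = ∑ k ∈ Finset.range (n + 1),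
      (n.choose k : ℚ) • FF n ((n : ℚ) - k + 1) := by
    simp only [QQ]
    rw [Polynomial.sum_comp]
    apply Finset.sum_congr rfl
    intro k _
    rw [Polynomial.smul_comp, FF_comp_add]
  have hc2 : (QQ n).comp (X - 1) = ∑ k ∈ Finset.range (n + 1),
      (n.choose k : ℚ) • FF n ((n : ℚ) - k - 1) := by
    simp only [QQ]
    rw [Polynomial.sum_comp]
    apply Finset.sum_congr rfl
    intro k _
    rw [Polynomial.smul_comp, FF_comp_sub]
  rw [hc1, hc2, ← Finset.sum_sub_distrib, Finset.mul_sum]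
  have step : ∀ k ∈ Finset.range (n + 1),
      X * ((n.choose k : ℚ) • FF n ((n : ℚ) - k + 1) - (n.choose k : ℚ) • FF n ((n : ℚ) - k - 1))
      = ((n.choose k : ℚ) * ((n : ℚ) + 2)) • FF n ((n : ℚ) - k)
        + ((n.choose k : ℚ) * k) • FF n ((n : ℚ) - k + 1)
        + ((n.choose k : ℚ) * ((n : ℚ) - k)) • FF n ((n : ℚ) - k - 1) := by
    intro k _
    have h := FF_step n ((n : ℚ) - k)
    have hk : (n : ℚ) - ((n : ℚ) - k) = k := by ring
    rw [hk] at h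
    rw [← smul_sub, mul_smul_comm, mul_sub, h]
    simp only [smul_add, ← Polynomial.smul_eq_C_mul, smul_smul]
  rw [Finset.sum_congr rfl step]
  simp only [Finset.sum_add_distrib]
  rw [sumA n, sumB n, ← Finset.sum_add_distrib, ← Finset.sum_add_distrib, QQ, Finset.smul_sum]
  apply Finset.sum_congr rfl
  intro k _
  rw [smul_smul, ← add_smul, ← add_smul]
  congr 1
  ring

lemma QQ_natDegree (n : ℕ) : (QQ n).natDegree ≤ n + 1 := by
  apply Polynomial.natDegree_sum_le_of_forall_le
  intro k _
  apply le_trans (Polynomial.natDegree_smul_le _ _)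
  apply le_trans (Polynomial.natDegree_prod_le _ _)
  apply le_trans (Finset.sum_le_card_nsmul _ _ 1 ?_)
  · simp
  · intro i _
    exact le_of_eq (Polynomial.natDegree_X_add_C _)

lemma QQ_coeff_zero (n : ℕ) : (QQ n).coeff 0 = 0 := by
  rw [Polynomial.coeff_zero_eq_eval_zero, QQ]
  rw [Polynomial.eval_finset_sum]
  apply Finset.sum_eq_zero
  intro k hk
  rw [Finset.mem_range] at hk
  rw [Polynomial.eval_smul, smul_eq_mul, FF, Polynomial.eval_prod]
  have : ∏ i ∈ Finset.range (n+1), (X + C ((n:ℚ) - k - i)).eval 0 = 0 := by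
    apply Finset.prod_eq_zero (Finset.mem_range.2 (by omega : n - k < n + 1))
    simp only [Polynomial.eval_add, Polynomial.eval_X, Polynomial.eval_C, zero_add]
    rw [Nat.cast_sub (by omega : k ≤ n)]
    ring
  rw [this, mul_zero]

lemma coeff_comp_diff (n d : ℕ) :
    ((QQ n).comp (X + 1) - (QQ n).comp (X - 1)).coeff d
      = ∑ m ∈ Finset.range (n + 2),
          (QQ n).coeff m * ((1 - (-1 : ℚ) ^ (m - d)) * (m.choose d)) := by
  have hX1 : (X - 1 : Polynomial ℚ) = X + C (-1) := by
    rw [map_neg, C_1, sub_eq_add_neg]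
  conv_lhs => rw [(QQ n).as_sum_range' (n + 2)
    (lt_of_le_of_lt (QQ_natDegree n) (by omega))]
  rw [Polynomial.sum_comp, Polynomial.sum_comp, ← Finset.sum_sub_distrib,
    Polynomial.finset_sum_coeff]
  apply Finset.sum_congr rfl
  intro m _
  rw [Polynomial.monomial_comp, Polynomial.monomial_comp, hX1, ← mul_sub,
    Polynomial.coeff_C_mul, Polynomial.coeff_sub, Polynomial.coeff_X_add_one_pow,
    Polynomial.coeff_X_add_C_pow]
  ring

lemma mainQ (n g : ℕ) (h2g : 2 * g ≤ n) :
    2 * (g : ℚ) * (QQ n).coeff (n + 1 - 2 * g)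
      = ∑ k ∈ Finset.Icc 1 g,
          ((n + 1 - 2 * (g - k)).choose (2 * k + 1) : ℚ) * (QQ n).coeff (n + 1 - 2 * (g - k)) := by
  set d : ℕ := n - 2 * g with hd
  have hkey := congrArg (fun p => Polynomial.coeff p (d + 1)) (keyid n)
  simp only [Polynomial.coeff_smul, smul_eq_mul] at hkey
  rw [Polynomial.coeff_X_mul, coeff_comp_diff n d] at hkey
  -- reduce the sum over range (n+2) to the image of range (g+1)
  have hinj : ∀ x ∈ Finset.range (g + 1), ∀ y ∈ Finset.range (g + 1),
      d + 1 + 2 * x = d + 1 + 2 * y → x = y := by intro x _ y _ h; omega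
  have hsub : (Finset.range (g + 1)).image (fun k => d + 1 + 2 * k) ⊆ Finset.range (n + 2) := by
    intro m hm
    simp only [Finset.mem_image, Finset.mem_range] at hm ⊢
    obtain ⟨k, hk, rfl⟩ := hm
    omega
  have hz : ∀ m ∈ Finset.range (n + 2),
      m ∉ (Finset.range (g + 1)).image (fun k => d + 1 + 2 * k) →
      (QQ n).coeff m * ((1 - (-1 : ℚ) ^ (m - d)) * (m.choose d)) = 0 := by
    intro m hm hnot
    simp only [Finset.mem_range] at hm
    simp only [Finset.mem_image, Finset.mem_range, not_exists, not_and] at hnot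
    rcases lt_or_ge m d with hlt | hge
    · rw [Nat.choose_eq_zero_of_lt hlt]
      simp
    · rcases Nat.even_or_odd (m - d) with he | ho
      · obtain ⟨j, hj⟩ := he
        have : (-1 : ℚ) ^ (m - d) = 1 := by
          rw [hj, ← two_mul, pow_mul]; norm_num
        rw [this]
        simp
      · obtain ⟨j, hj⟩ := ho
        exfalso
        exact hnot j (by omega) (by omega)
  rw [← Finset.sum_subset hsub hz, Finset.sum_image hinj] at hkey
  have hterm : ∀ k ∈ Finset.range (g + 1),
      (QQ n).coeff (d + 1 + 2 * k) *
          ((1 - (-1 : ℚ) ^ (d + 1 + 2 * k - d)) * ((d + 1 + 2 * k).choose d))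
        = 2 * ((d + 1 + 2 * k).choose (2 * k + 1) : ℚ) * (QQ n).coeff (d + 1 + 2 * k) := by
    intro k _
    have h1 : d + 1 + 2 * k - d = 2 * k + 1 := by omega
    have h2 : (-1 : ℚ) ^ (2 * k + 1) = -1 := Odd.neg_one_pow ⟨k, by ring⟩
    have h3 : (d + 1 + 2 * k).choose d = (d + 1 + 2 * k).choose (2 * k + 1) := by
      have := Nat.choose_symm (by omega : 2 * k + 1 ≤ d + 1 + 2 * k)
      rw [(by omega : d + 1 + 2 * k - (2 * k + 1) = d)] at this
      exact this
    rw [h1, h2, h3]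
    ring
  rw [Finset.sum_congr rfl hterm] at hkey
  have hins : Finset.range (g + 1) = insert 0 (Finset.Icc 1 g) := by
    ext x; simp; omega
  rw [hins, Finset.sum_insert (by simp)] at hkey
  have hsum : ∑ k ∈ Finset.Icc 1 g,
      2 * ((d + 1 + 2 * k).choose (2 * k + 1) : ℚ) * (QQ n).coeff (d + 1 + 2 * k)
      = 2 * ∑ k ∈ Finset.Icc 1 g,
          ((n + 1 - 2 * (g - k)).choose (2 * k + 1) : ℚ) * (QQ n).coeff (n + 1 - 2 * (g - k)) := by
    rw [Finset.mul_sum]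
    apply Finset.sum_congr rfl
    intro k hk
    rw [Finset.mem_Icc] at hk
    rw [(by omega : n + 1 - 2 * (g - k) = d + 1 + 2 * k)]
    ring
  rw [hsum] at hkey
  have hzero : (d + 1 + 2 * 0).choose (2 * 0 + 1) = d + 1 := by simp
  rw [hzero] at hkey
  have hidx : n + 1 - 2 * g = d + 1 := by omega
  rw [hidx]
  have hcast : ((d : ℚ)) = (n : ℚ) - 2 * g := by
    rw [hd]; push_cast [Nat.cast_sub h2g]; ring
  have hz2 : (d + 1 + 2 * 0) = d + 1 := by omega
  rw [hz2] at hkey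
  push_cast at hkey ⊢
  linear_combination -hkey / 2 + ((QQ n).coeff (d + 1)) * hcast

/-- Chapuy's recursion `2g·A(n,g) = ∑_{k=1}^g C(n+1-2(g-k), 2k+1)·A(n,g-k)`,
where `A(n,g)` is the coefficient of `x^(n+1-2g)` in
`((2n)!/(2^n n!(n+1)!))·∑_k C(n,k)(x+n-k)_{n+1}`. -/
theorem stmt11 (n : ℕ) (hn : 1 ≤ n) (g : ℕ) :
    letI P : Polynomial ℚ :=
      (((2 * n).factorial : ℚ) / (2 ^ n * (n.factorial : ℚ) * ((n + 1).factorial : ℚ))) •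
        ∑ k ∈ Finset.range (n + 1), (n.choose k : ℚ) •
          ∏ i ∈ Finset.range (n + 1), (X + C ((n : ℚ) - (k : ℚ) - (i : ℚ)))
    letI A : ℕ → ℚ := fun h => P.coeff (n + 1 - 2 * h)
    2 * (g : ℚ) * A g =
      ∑ k ∈ Finset.Icc 1 g, ((n + 1 - 2 * (g - k)).choose (2 * k + 1) : ℚ) * A (g - k) := by
  set c : ℚ := ((2 * n).factorial : ℚ) / (2 ^ n * (n.factorial : ℚ) * ((n + 1).factorial : ℚ))
    with hc
  show 2 * (g : ℚ) * (c • QQ n).coeff (n + 1 - 2 * g) =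
      ∑ k ∈ Finset.Icc 1 g, ((n + 1 - 2 * (g - k)).choose (2 * k + 1) : ℚ) *
        (c • QQ n).coeff (n + 1 - 2 * (g - k))
  simp only [Polynomial.coeff_smul, smul_eq_mul]
  by_cases hcase : 2 * g ≤ n
  · have hm := mainQ n g hcase
    calc 2 * (g : ℚ) * (c * (QQ n).coeff (n + 1 - 2 * g))
        = c * (2 * (g : ℚ) * (QQ n).coeff (n + 1 - 2 * g)) := by ring
      _ = c * ∑ k ∈ Finset.Icc 1 g,
            ((n + 1 - 2 * (g - k)).choose (2 * k + 1) : ℚ) *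
              (QQ n).coeff (n + 1 - 2 * (g - k)) := by rw [hm]
      _ = _ := by
            rw [Finset.mul_sum]
            exact Finset.sum_congr rfl (fun k _ => by ring)
  · have hL : n + 1 - 2 * g = 0 := by omega
    rw [hL, QQ_coeff_zero]
    rw [Finset.sum_eq_zero]
    · ring
    · intro k hk
      rw [Finset.mem_Icc] at hk
      rw [Nat.choose_eq_zero_of_lt (by omega : n + 1 - 2 * (g - k) < 2 * k + 1)]
      simp
end
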